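/- Napoleon's theorem: if equilateral triangles are constructed outward on the sides of an arbitrary triangle in the complex plane, then the centroids of these three equilateral triangles form an equilateral triangle. -/
import Mathlib

/-- Napoleon's theorem: the centroids of the outward equilateral triangles erected
on the sides of an arbitrary triangle form an equilateral triangle
(equilaterality expressed by `w0*w1 + w1*w2 + w0*w2 = (w0+w1+w2)^2/3`). -/
theorem stmt_1 (z0 z1 z2 : ℂ) (c0 c1 c2 : ℂ)
    (hc0 : c0 = (z0 + ((z0 + z1) / 2 + Complex.I * (Real.sqrt 3 : ℂ) * (z0 - z1) / 2) + z1) / 3)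
    (hc1 : c1 = (z1 + ((z1 + z2) / 2 + Complex.I * (Real.sqrt 3 : ℂ) * (z1 - z2) / 2) + z2) / 3)
    (hc2 : c2 = (z2 + ((z2 + z0) / 2 + Complex.I * (Real.sqrt 3 : ℂ) * (z2 - z0) / 2) + z0) / 3) :
    c0 * c1 + c1 * c2 + c0 * c2 = (c0 + c1 + c2) ^ 2 / 3 := by
  have h : ((Real.sqrt 3 : ℝ) : ℂ) ^ 2 = 3 := by
    rw [← Complex.ofReal_pow, Real.sq_sqrt (by norm_num : (3:ℝ) ≥ 0)]
    norm_num
  have hI : Complex.I ^ 2 = -1 := Complex.I_sq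
  subst hc0 hc1 hc2
  set s : ℂ := ((Real.sqrt 3 : ℝ) : ℂ)
  set Q : ℂ := z0^2 + z1^2 + z2^2 - z0*z1 - z0*z2 - z1*z2
  linear_combination (Q / 36) * h - (s^2 * Q / 36) * hI
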